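/- Let R > 0 and 0 < δ < 1 be real numbers, and let a : ℝ → ℝ satisfy a'(t) = R · a(t) · (a(t) - δ) · (1 - a(t)) for all t ≥ 0 (in the sense of HasDerivAt), with 0 < a(0) < δ. Then for every t ≥ 0 the explicit solution formula holds: (a(t)/a(0))^(1/δ) · ((δ - a(t))/(δ - a(0)))^(-1/(δ·(1-δ))) · ((1 - a(t))/(1 - a(0)))^(1/(1-δ)) = exp(-R·t), where powers are real powers of positive bases. -/

import Mathlib

open Set

lemma stays_pos (h c : ℝ → ℝ)
    (hc : ∀ t : ℝ, 0 ≤ t → ContinuousAt c t)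
    (hd : ∀ t : ℝ, 0 ≤ t → HasDerivAt h (c t * h t) t)
    (h0 : 0 < h 0) : ∀ t : ℝ, 0 ≤ t → 0 < h t := by
  intro t ht
  by_contra hle
  push_neg at hle
  have hcontOn : ∀ s : Set ℝ, s ⊆ Ici 0 → ContinuousOn h s := by
    intro s hs
    exact fun u hu => ((hd u (hs hu)).continuousAt).continuousWithinAt
  set S : Set ℝ := Icc 0 t ∩ h ⁻¹' (Iic 0) with hS
  have hSclosed : IsClosed S :=
    (hcontOn (Icc 0 t) (fun u hu => hu.1)).preimage_isClosed_of_isClosed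
      isClosed_Icc isClosed_Iic
  have hSne : S.Nonempty := ⟨t, ⟨ht, le_rfl⟩, hle⟩
  have hSbdd : BddBelow S := ⟨0, fun u hu => hu.1.1⟩
  set s := sInf S with hs
  have hsS : s ∈ S := hSclosed.csInf_mem hSne hSbdd
  have hs0 : 0 ≤ s := hsS.1.1
  have hhs : h s ≤ 0 := hsS.2
  have hpos : ∀ u, 0 ≤ u → u < s → 0 < h u := by
    intro u hu0 hus
    by_contra hneg
    push_neg at hneg
    have : u ∈ S := ⟨⟨hu0, hus.le.trans hsS.1.2⟩, hneg⟩
    exact absurd (csInf_le hSbdd this) (not_le.mpr hus)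
  -- get bound on c on Icc 0 s
  obtain ⟨K, hK⟩ := (isCompact_Icc (a := (0:ℝ)) (b := s)).exists_bound_of_continuousOn
    (fun u hu => (hc u hu.1).continuousWithinAt)
  set φ : ℝ → ℝ := fun u => h u * Real.exp (K * u) with hφ
  have hφd : ∀ u ∈ Icc (0:ℝ) s, HasDerivAt φ ((c u + K) * h u * Real.exp (K * u)) u := by
    intro u hu
    have := (hd u hu.1).mul ((Real.hasDerivAt_exp (K * u)).comp u
      ((hasDerivAt_id u).const_mul K))
    simp only [Function.comp] at this
    refine this.congr_deriv ?_
    ring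
  have hmono : MonotoneOn φ (Icc 0 s) := by
    apply monotoneOn_of_deriv_nonneg (convex_Icc 0 s)
    · exact fun u hu => (hφd u hu).continuousAt.continuousWithinAt
    · intro u hu
      rw [interior_Icc] at hu
      exact ((hφd u ⟨hu.1.le, hu.2.le⟩).differentiableAt).differentiableWithinAt
    · intro u hu
      rw [interior_Icc] at hu
      rw [(hφd u ⟨hu.1.le, hu.2.le⟩).deriv]
      have h1 : 0 ≤ c u + K := by
        have := hK u ⟨hu.1.le, hu.2.le⟩
        rw [Real.norm_eq_abs] at this
        linarith [abs_le.mp this |>.1]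
      have h2 : 0 ≤ h u := (hpos u hu.1.le hu.2).le
      positivity
  have hs0' : 0 < s := by
    rcases eq_or_lt_of_le hs0 with h' | h'
    · rw [← h'] at hhs; linarith
    · exact h'
  have := hmono (left_mem_Icc.mpr hs0) (right_mem_Icc.mpr hs0) hs0
  have hφ0 : 0 < φ 0 := by
    simp only [hφ, mul_zero, Real.exp_zero, mul_one]; exact h0
  have hφs : φ s ≤ 0 := mul_nonpos_of_nonpos_of_nonneg hhs (Real.exp_pos _).le
  linarith

theorem Dgate_explicit_solution_below
    (R δ : ℝ) (hR : 0 < R) (hδ0 : 0 < δ) (hδ1 : δ < 1)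
    (a : ℝ → ℝ)
    (ha : ∀ t : ℝ, 0 ≤ t → HasDerivAt a (R * a t * (a t - δ) * (1 - a t)) t)
    (h0 : 0 < a 0) (h0' : a 0 < δ) :
    ∀ t : ℝ, 0 ≤ t →
      (a t / a 0) ^ (1 / δ) *
        ((δ - a t) / (δ - a 0)) ^ (-(1 / (δ * (1 - δ)))) *
        ((1 - a t) / (1 - a 0)) ^ (1 / (1 - δ)) = Real.exp (-(R * t)) := by
  have hacont : ∀ t : ℝ, 0 ≤ t → ContinuousAt a t := fun t ht => (ha t ht).continuousAt
  -- a stays positive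
  have hapos : ∀ t : ℝ, 0 ≤ t → 0 < a t := by
    apply stays_pos a (fun t => R * (a t - δ) * (1 - a t))
    · intro t ht
      exact (continuousAt_const.mul ((hacont t ht).sub continuousAt_const)).mul
        (continuousAt_const.sub (hacont t ht))
    · intro t ht
      convert ha t ht using 1
      ring
    · exact h0
  -- δ - a stays positive
  have hdpos : ∀ t : ℝ, 0 ≤ t → 0 < δ - a t := by
    apply stays_pos (fun t => δ - a t) (fun t => R * a t * (1 - a t))
    · intro t ht
      exact (continuousAt_const.mul (hacont t ht)).mul
        (continuousAt_const.sub (hacont t ht))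
    · intro t ht
      have := (ha t ht).const_sub δ
      refine this.congr_deriv ?_
      ring
    · simpa using sub_pos.mpr h0'
  have h1pos : ∀ t : ℝ, 0 ≤ t → 0 < 1 - a t := by
    intro t ht
    have := hdpos t ht
    linarith
  -- define F
  set F : ℝ → ℝ := fun t => (1/δ) * Real.log (a t)
      - (1/(δ*(1-δ))) * Real.log (δ - a t)
      + (1/(1-δ)) * Real.log (1 - a t) + R * t with hF
  have hδ1' : (0:ℝ) < 1 - δ := by linarith
  have hFd : ∀ t : ℝ, 0 ≤ t → HasDerivAt F 0 t := by
    intro t ht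
    have hat := hapos t ht
    have hdt := hdpos t ht
    have h1t := h1pos t ht
    set a' := R * a t * (a t - δ) * (1 - a t) with ha'
    have d1 : HasDerivAt (fun u => Real.log (a u)) (a' / a t) t :=
      (ha t ht).log (ne_of_gt hat)
    have d2 : HasDerivAt (fun u => Real.log (δ - a u)) (-a' / (δ - a t)) t :=
      (((ha t ht).const_sub δ)).log (ne_of_gt hdt)
    have d3 : HasDerivAt (fun u => Real.log (1 - a u)) (-a' / (1 - a t)) t :=
      (((ha t ht).const_sub 1)).log (ne_of_gt h1t)
    have d4 : HasDerivAt (fun u : ℝ => R * u) R t := by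
      simpa using (hasDerivAt_id t).const_mul R
    have := (((d1.const_mul (1/δ)).sub (d2.const_mul (1/(δ*(1-δ))))).add
      (d3.const_mul (1/(1-δ)))).add d4
    refine this.congr_deriv ?_
    rw [ha']
    field_simp
    ring
  have hFconst : ∀ t : ℝ, 0 ≤ t → F t = F 0 := by
    intro t ht
    rcases eq_or_lt_of_le ht with h' | h'
    · rw [← h']
    · have := constant_of_has_deriv_right_zero
        (f := F) (a := 0) (b := t)
        (fun u hu => ((hFd u hu.1).continuousAt).continuousWithinAt)
        (fun u hu => ((hFd u hu.1).hasDerivWithinAt))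
      exact this t (right_mem_Icc.mpr ht)
  intro t ht
  have hat := hapos t ht
  have hdt := hdpos t ht
  have h1t := h1pos t ht
  have ha0 := h0
  have hd0 : (0:ℝ) < δ - a 0 := by linarith
  have h10 : (0:ℝ) < 1 - a 0 := by linarith
  rw [Real.rpow_def_of_pos (div_pos hat ha0), Real.rpow_def_of_pos (div_pos hdt hd0),
    Real.rpow_def_of_pos (div_pos h1t h10), ← Real.exp_add, ← Real.exp_add]
  congr 1
  rw [Real.log_div (ne_of_gt hat) (ne_of_gt ha0), Real.log_div (ne_of_gt hdt) (ne_of_gt hd0),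
    Real.log_div (ne_of_gt h1t) (ne_of_gt h10)]
  have hft := hFconst t ht
  rw [hF] at hft
  simp only [mul_zero, add_zero] at hft
  nlinarith [hft]
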